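/- Let p be a real number and define X_1 = • and, for n ≥ 1, X_{n+1} = Σ_{k=1}^{n} binom(p,k) Σ_{n_1+⋯+n_k=n, n_i≥1} B_+(X_{n_1}X_{n_2}⋯X_{n_k}), where B_+ is extended multilinearly to ordered forests. Then this solution of the combinatorial Dyson–Schwinger equation X = 1 + B_+(X^p) in the Foissy Hopf algebra H_F is given explicitly by X_n = Σ_{T : |T| = n} C_p(T)·T, the sum over all planar rooted trees with n vertices. -/

import Mathlib

/-! ### Planar rooted trees -/

/-- A planar rooted tree: a root with an ordered list of branches.
`PTree.node [T₁,…,T_k]` is `B₊(T₁⋯T_k)`; `PTree.node []` is the one-vertex tree `•`. -/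
inductive PTree : Type where
  | node : List PTree → PTree

instance : Inhabited PTree := ⟨.node []⟩

noncomputable instance : DecidableEq PTree := Classical.decEq _

/-! ### Enumeration of planar trees by size -/

mutual
/-- All planar rooted trees with exactly `n` vertices. -/
def treesOfSize : ℕ → List PTree
  | 0 => []
  | n + 1 => (forestsOfSize n).map PTree.node
  termination_by n => 2 * n
  decreasing_by omega
/-- All ordered forests of planar rooted trees with `n` vertices in total. -/
def forestsOfSize : ℕ → List (List PTree)
  | 0 => [[]]
  | n + 1 =>
      ((List.range (n + 1)).attach.map (fun j =>
        (treesOfSize (j.1 + 1)).flatMap (fun t =>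
          (forestsOfSize (n - j.1)).map (t :: ·)))).flatten
  termination_by n => 2 * n + 1
  decreasing_by
  · have hj := List.mem_range.mp j.2; omega
  · have hj := List.mem_range.mp j.2; omega
end

/-! ### The Foissy Hopf algebra -/

/-- The Foissy Hopf algebra over `k`: the tensor algebra on the span of planar
rooted trees, with monomial basis the ordered forests (words) of planar trees. -/
abbrev HF (k : Type*) [CommSemiring k] := MonoidAlgebra k (FreeMonoid PTree)

/-- The model for `H_F ⊗ H_F`. -/
abbrev HF2 (k : Type*) [CommSemiring k] :=
  MonoidAlgebra k (FreeMonoid PTree × FreeMonoid PTree)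

/-- `B₊` on `H_F`: sends an ordered forest to the tree obtained by attaching a
new root, extended linearly. -/
noncomputable def BplusF (k : Type*) [CommSemiring k] : HF k → HF k :=
  fun x => MonoidAlgebra.ofCoeff
    (Finsupp.mapDomain (fun F => FreeMonoid.of (PTree.node (FreeMonoid.toList F))) x.coeff)

/-- The tensor product map `H_F × H_F → H_F ⊗ H_F` in the pair model. -/
noncomputable def tensHF (k : Type*) [CommSemiring k] (f g : HF k) : HF2 k :=
  f.coeff.sum (fun a x => g.coeff.sum (fun b y => MonoidAlgebra.single (a, b) (x * y)))

/-- The binomial coefficient `binom(p,k) = p(p−1)⋯(p−k+1)/k!` of a real number `p`. -/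
noncomputable def rbinom (p : ℝ) (n : ℕ) : ℝ :=
  (∏ i ∈ Finset.range n, (p - i)) / (n.factorial : ℝ)

/-- `C_p(T) = ∏_{v ∈ V̄(T)} binom(p, c(v))`, where `c(v)` is the number of children
of `v` (vertices with no children contribute the factor `binom(p,0) = 1`). -/
noncomputable def Cp (p : ℝ) : PTree → ℝ
  | .node l => rbinom p l.length * (l.attach.map (fun x => Cp p x.1)).prod
decreasing_by
  have h := List.sizeOf_lt_of_mem x.2
  simp only [PTree.node.sizeOf_spec]
  omega

/-- All compositions of `n` into exactly `k` positive parts. -/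
def compositionsList : ℕ → ℕ → List (List ℕ)
  | n, 0 => if n = 0 then [[]] else []
  | n, k + 1 =>
      ((List.range n).map (fun i =>
        (compositionsList (n - (i + 1)) k).map ((i + 1) :: ·))).flatten

/-- The homogeneous components `X_n = Σ_{|T| = n} C_p(T)·T` of the solution of the
combinatorial Dyson–Schwinger equation `X = 1 + B₊(X^p)` in `H_F`. -/
noncomputable def XF (p : ℝ) (n : ℕ) : HF ℝ :=
  ((treesOfSize n).map (fun T => MonoidAlgebra.single (FreeMonoid.of T) (Cp p T))).sum

noncomputable def CpF (p : ℝ) (F : List PTree) : ℝ := (F.map (Cp p)).prod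

lemma Cp_node (p : ℝ) (l : List PTree) : Cp p (PTree.node l) = rbinom p l.length * CpF p l := by
  rw [Cp, CpF]
  congr 1
  simp [List.attach_map_val]

lemma treesOfSize_succ (n : ℕ) : treesOfSize (n+1) = (forestsOfSize n).map PTree.node := by
  rw [treesOfSize]

lemma forestsOfSize_succ (n : ℕ) : forestsOfSize (n+1) =
    ((List.range (n + 1)).map (fun j =>
        (treesOfSize (j + 1)).flatMap (fun t =>
          (forestsOfSize (n - j)).map (t :: ·)))).flatten := by
  rw [forestsOfSize]
  congr 1
  simp [List.attach_map_val]

/-- Forests whose i-th tree has `comp i` vertices. -/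
def forestsOfComp : List ℕ → List (List PTree)
  | [] => [[]]
  | m :: comp => (treesOfSize m).flatMap (fun t => (forestsOfComp comp).map (t :: ·))

lemma mem_compositionsList {n k : ℕ} {comp : List ℕ} (h : comp ∈ compositionsList n k) :
    comp.length = k ∧ comp.sum = n ∧ ∀ m ∈ comp, 1 ≤ m := by
  induction k generalizing n comp with
  | zero =>
    rw [compositionsList] at h
    split_ifs at h with hn
    · simp at h; simp [h, hn]
    · simp at h
  | succ k ih =>
    rw [compositionsList] at h
    simp only [List.mem_flatten, List.mem_map, List.mem_range] at h
    obtain ⟨_, ⟨i, hi, rfl⟩, h⟩ := h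
    simp only [List.mem_map] at h
    obtain ⟨rest, hrest, rfl⟩ := h
    obtain ⟨h1, h2, h3⟩ := ih hrest
    refine ⟨by simp [h1], by simp [h2]; omega, ?_⟩
    intro m hm
    rcases List.mem_cons.mp hm with rfl | hm
    · omega
    · exact h3 m hm

lemma compositionsList_eq_nil {n k : ℕ} (h : n < k) : compositionsList n k = [] := by
  induction k generalizing n with
  | zero => omega
  | succ k ih =>
    rw [compositionsList]
    simp only [List.flatten_eq_nil_iff, List.mem_map, List.mem_range]
    rintro L ⟨i, hi, rfl⟩
    rw [ih (by omega)]
    simp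

lemma length_mem_forestsOfComp {comp : List ℕ} {F : List PTree} (h : F ∈ forestsOfComp comp) :
    F.length = comp.length := by
  induction comp generalizing F with
  | nil => simp [forestsOfComp] at h; simp [h]
  | cons m comp ih =>
    rw [forestsOfComp] at h
    simp only [List.mem_flatMap, List.mem_map] at h
    obtain ⟨t, _, F', hF', rfl⟩ := h
    simp [ih hF']

section sums
variable {α β : Type*} {M : Type*} [AddCommMonoid M]

lemma sum_map_flatten (L : List (List α)) (g : α → M) :
    (L.flatten.map g).sum = (L.map (fun l => (l.map g).sum)).sum := by
  rw [List.map_flatten, List.sum_flatten, List.map_map]; rfl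

lemma sum_map_flatMap (l : List α) (h : α → List β) (g : β → M) :
    ((l.flatMap h).map g).sum = (l.map (fun a => ((h a).map g).sum)).sum := by
  rw [List.flatMap, sum_map_flatten, List.map_map]; rfl

lemma list_range_sum (n : ℕ) (f : ℕ → M) :
    ((List.range n).map f).sum = ∑ k ∈ Finset.range n, f k := by
  induction n with
  | zero => simp
  | succ n ih => rw [List.range_succ, Finset.sum_range_succ, ← ih]; simp

lemma finset_sum_list_sum_comm (s : Finset α) (l : List β) (f : α → β → M) :
    ∑ k ∈ s, (l.map (f k)).sum = (l.map (fun a => ∑ k ∈ s, f k a)).sum := by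
  induction l with
  | nil => simp
  | cons b l ih => simp [Finset.sum_add_distrib, ih]

end sums

lemma sum_map_add {α M : Type*} [AddCommMonoid M] (l : List α) (f g : α → M) :
    (l.map (fun a => f a + g a)).sum = (l.map f).sum + (l.map g).sum := by
  induction l with
  | nil => simp
  | cons a l ih => simp [ih]; abel

lemma list_list_sum_comm {α β M : Type*} [AddCommMonoid M] (l : List α) (l' : List β)
    (f : α → β → M) :
    (l.map (fun a => (l'.map (f a)).sum)).sum = (l'.map (fun b => (l.map (fun a => f a b)).sum)).sum := by
  induction l with
  | nil => simp
  | cons a l ih => simp only [List.map_cons, List.sum_cons, ih, ← sum_map_add]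

lemma claimC {M : Type*} [AddCommMonoid M] :
    ∀ (n : ℕ) (g : List PTree → M),
    ((forestsOfSize n).map g).sum =
      ∑ k ∈ Finset.range (n+1),
        ((compositionsList n k).map (fun comp => ((forestsOfComp comp).map g).sum)).sum := by
  intro n
  induction n using Nat.strong_induction_on with
  | _ n ih =>
    intro g
    match n with
    | 0 => simp [forestsOfSize, compositionsList, forestsOfComp]
    | n + 1 =>
      have lhs_eq : ((forestsOfSize (n+1)).map g).sum
          = ∑ j ∈ Finset.range (n+1), ∑ k ∈ Finset.range (n+1),
              ((compositionsList (n-j) k).map (fun comp =>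
                ((treesOfSize (j+1)).map (fun t =>
                  ((forestsOfComp comp).map (fun F => g (t :: F))).sum)).sum)).sum := by
        rw [forestsOfSize_succ, sum_map_flatten, List.map_map, list_range_sum]
        refine Finset.sum_congr rfl fun j hj => ?_
        simp only [Function.comp_def]
        rw [sum_map_flatMap]
        have step : ∀ t ∈ treesOfSize (j+1),
            (((forestsOfSize (n-j)).map (t :: ·)).map g).sum =
            ∑ k ∈ Finset.range (n+1),
              ((compositionsList (n-j) k).map (fun comp =>
                ((forestsOfComp comp).map (fun F => g (t :: F))).sum)).sum := by
          intro t _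
          rw [List.map_map]
          simp only [Function.comp_def]
          rw [ih (n - j) (by omega) (fun F => g (t :: F))]
          refine Finset.sum_subset (Finset.range_subset_range.mpr (by omega)) ?_
          intro k _ hk
          rw [compositionsList_eq_nil (by simp at hk; omega)]
          simp
        rw [List.map_congr_left step, ← finset_sum_list_sum_comm]
        refine Finset.sum_congr rfl fun k _ => ?_
        exact list_list_sum_comm _ _ _
      rw [lhs_eq]
      -- RHS
      rw [Finset.sum_range_succ' (fun k =>
        ((compositionsList (n+1) k).map (fun comp => ((forestsOfComp comp).map g).sum)).sum)]
      have h0 : compositionsList (n+1) 0 = [] := by rw [compositionsList]; simp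
      rw [h0]
      simp only [List.map_nil, List.sum_nil, add_zero]
      rw [Finset.sum_comm]
      refine Finset.sum_congr rfl fun k _ => ?_
      refine Eq.symm ?_
      show ((compositionsList (n+1) (k+1)).map (fun comp => ((forestsOfComp comp).map g).sum)).sum
        = ∑ j ∈ Finset.range (n+1), ((compositionsList (n-j) k).map (fun comp =>
            ((treesOfSize (j+1)).map (fun t =>
              ((forestsOfComp comp).map (fun F => g (t :: F))).sum)).sum)).sum
      rw [compositionsList, sum_map_flatten, List.map_map, list_range_sum]
      simp only [Nat.succ_sub_succ]
      refine Finset.sum_congr rfl fun i hi => ?_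
      simp only [Function.comp_def, List.map_map]
      refine congrArg List.sum (List.map_congr_left fun comp _ => ?_)
      show ((forestsOfComp ((i+1) :: comp)).map g).sum = _
      rw [forestsOfComp, sum_map_flatMap]
      refine congrArg List.sum (List.map_congr_left fun t _ => ?_)
      rw [List.map_map]
      simp only [Function.comp_def]


lemma list_sum_mul {α β R : Type*} [NonUnitalNonAssocSemiring R] (l : List α) (l' : List β)
    (f : α → R) (g : β → R) :
    (l.map f).sum * (l'.map g).sum = (l.map (fun a => (l'.map (fun b => f a * g b)).sum)).sum := by
  induction l with
  | nil => simp
  | cons a l ih => simp [add_mul, ih, List.sum_map_mul_left]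

lemma prod_XF (p : ℝ) : ∀ comp : List ℕ,
    (comp.map (XF p)).prod =
      ((forestsOfComp comp).map (fun F => MonoidAlgebra.single (FreeMonoid.ofList F) (CpF p F))).sum := by
  intro comp
  induction comp with
  | nil =>
    simp only [forestsOfComp, CpF, List.map_nil, List.prod_nil, List.map_cons, List.sum_cons,
      List.sum_nil, add_zero]
    rfl
  | cons m comp ih =>
    rw [List.map_cons, List.prod_cons, ih, XF, list_sum_mul, forestsOfComp, sum_map_flatMap]
    refine congrArg List.sum (List.map_congr_left fun t _ => ?_)
    rw [List.map_map]
    refine congrArg List.sum (List.map_congr_left fun F _ => ?_)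
    simp only [Function.comp_def, MonoidAlgebra.single_mul_single]
    rw [FreeMonoid.ofList_cons]
    congr 1

lemma BplusF_listSum {α : Type*} (l : List α) (f : α → HF ℝ) :
    BplusF ℝ ((l.map f).sum) = (l.map (fun a => BplusF ℝ (f a))).sum := by
  induction l with
  | nil => simp [BplusF]
  | cons a l ih => simp only [List.map_cons, List.sum_cons, BplusF] at *; rw [MonoidAlgebra.coeff_add, Finsupp.mapDomain_add, MonoidAlgebra.ofCoeff_add, ih]

lemma BplusF_single (F : List PTree) (c : ℝ) :
    BplusF ℝ (MonoidAlgebra.single (FreeMonoid.ofList F) c)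
      = MonoidAlgebra.single (FreeMonoid.of (PTree.node F)) c := by
  unfold BplusF
  rw [MonoidAlgebra.coeff_single, Finsupp.mapDomain_single, FreeMonoid.toList_ofList, MonoidAlgebra.ofCoeff_single]



/-- The solution of the combinatorial Dyson–Schwinger equation
`X = 1 + B₊(X^p)` in the Foissy Hopf algebra, given by `X₁ = •` and
`X_{n+1} = Σ_{k=1}^n binom(p,k) Σ_{n₁+⋯+n_k=n} B₊(X_{n₁}⋯X_{n_k})`, is
`X_n = Σ_{|T|=n} C_p(T)·T`. -/
theorem dyson_schwinger_solution_HF (p : ℝ) (X : ℕ → HF ℝ)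
    (h1 : X 1 = MonoidAlgebra.single (FreeMonoid.of (PTree.node [])) 1)
    (hrec : ∀ n, 1 ≤ n →
      X (n + 1) = ∑ k ∈ Finset.Icc 1 n, rbinom p k •
        BplusF ℝ (((compositionsList n k).map (fun comp => (comp.map X).prod)).sum)) :
    ∀ n, 1 ≤ n → X n = XF p n := by
  intro n
  induction n using Nat.strong_induction_on with
  | _ n ih =>
    intro hn
    match n, hn with
    | 1, _ =>
      rw [h1, XF, treesOfSize_succ]
      simp [forestsOfSize, Cp_node, CpF, rbinom]
    | (m + 2), _ =>
      rw [hrec (m+1) (by omega)]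
      set g : List PTree → HF ℝ := fun F =>
        MonoidAlgebra.single (FreeMonoid.of (PTree.node F)) (rbinom p F.length * CpF p F) with hg
      have hXF : XF p (m+2) = ((forestsOfSize (m+1)).map g).sum := by
        rw [XF, treesOfSize_succ, List.map_map]
        refine congrArg List.sum (List.map_congr_left fun F _ => ?_)
        simp only [Function.comp_def, Cp_node, hg]
      have hterm : ∀ k ∈ Finset.Icc 1 (m+1),
          rbinom p k • BplusF ℝ (((compositionsList (m+1) k).map
              (fun comp => (comp.map X).prod)).sum)
          = ((compositionsList (m+1) k).map
              (fun comp => ((forestsOfComp comp).map g).sum)).sum := by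
        intro k hk
        have hX : (compositionsList (m+1) k).map (fun comp => (comp.map X).prod)
            = (compositionsList (m+1) k).map (fun comp => (comp.map (XF p)).prod) := by
          refine List.map_congr_left fun comp hcomp => ?_
          obtain ⟨hlen, hsum, hpos⟩ := mem_compositionsList hcomp
          congr 1
          refine List.map_congr_left fun q hq => ?_
          have h1q : 1 ≤ q := hpos q hq
          have h2q : q ≤ m + 1 := by
            have := List.single_le_sum (l := comp) (fun x _ => Nat.zero_le x) q hq
            omega
          exact ih q (by omega) h1q
        rw [hX]
        simp only [prod_XF]
        rw [BplusF_listSum]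
        simp only [BplusF_listSum, BplusF_single]
        rw [List.smul_sum, List.map_map]
        refine congrArg List.sum (List.map_congr_left fun comp hcomp => ?_)
        simp only [Function.comp_def, List.smul_sum, List.map_map]
        refine congrArg List.sum (List.map_congr_left fun F hF => ?_)
        simp only [Function.comp_def, MonoidAlgebra.smul_single', Finsupp.smul_single', hg]
        have : F.length = k := by
          rw [length_mem_forestsOfComp hF, (mem_compositionsList hcomp).1]
        rw [this]
      rw [Finset.sum_congr rfl hterm, hXF, claimC (m+1) g]
      rw [Finset.range_eq_Ico, Finset.sum_eq_sum_Ico_succ_bot (by omega)]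
      rw [show compositionsList (m+1) 0 = [] from by rw [compositionsList]; simp]
      rw [Finset.Ico_add_one_right_eq_Icc]
      simp
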